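/- Let p, q be nonzero complex numbers. The 4×4 matrix R_I = [[1,0,0,0],[0,p,1-pq,0],[0,0,q,0],[0,0,0,1]] (rows and columns indexed by pairs (1,1),(1,2),(2,1),(2,2)) satisfies the quantum Yang–Baxter equation R₁₂ R₁₃ R₂₃ = R₂₃ R₁₃ R₁₂ as 8×8 matrices, where R₁₂ = R_I ⊗ I₂, R₂₃ = I₂ ⊗ R_I, and R₁₃ = (I₂ ⊗ P)(R_I ⊗ I₂)(I₂ ⊗ P) with P the 4×4 flip matrix sending e_i ⊗ e_j to e_j ⊗ e_i. -/
import Mathlib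


open Matrix Kronecker

/-- The type I R-matrix of the two-parameter differential calculus on the quantum
exterior plane, with rows and columns indexed by pairs (1,1),(1,2),(2,1),(2,2). -/
noncomputable def RmatI (p q : ℂ) : Matrix (Fin 2 × Fin 2) (Fin 2 × Fin 2) ℂ :=
  (!![1, 0, 0, 0;
      0, p, 1 - p * q, 0;
      0, 0, q, 0;
      0, 0, 0, 1]).submatrix finProdFinEquiv finProdFinEquiv

/-- The 4×4 flip matrix sending `e_i ⊗ e_j` to `e_j ⊗ e_i`. -/
def flipP : Matrix (Fin 2 × Fin 2) (Fin 2 × Fin 2) ℂ :=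
  Matrix.of fun x y => if x.1 = y.2 ∧ x.2 = y.1 then 1 else 0

/-- `R₁₂ = R ⊗ I₂` as an 8×8 matrix (indices reassociated). -/
noncomputable def R12 (R : Matrix (Fin 2 × Fin 2) (Fin 2 × Fin 2) ℂ) :
    Matrix (Fin 2 × Fin 2 × Fin 2) (Fin 2 × Fin 2 × Fin 2) ℂ :=
  Matrix.reindex (Equiv.prodAssoc _ _ _) (Equiv.prodAssoc _ _ _)
    (R ⊗ₖ (1 : Matrix (Fin 2) (Fin 2) ℂ))

/-- `R₂₃ = I₂ ⊗ R` as an 8×8 matrix. -/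
noncomputable def R23 (R : Matrix (Fin 2 × Fin 2) (Fin 2 × Fin 2) ℂ) :
    Matrix (Fin 2 × Fin 2 × Fin 2) (Fin 2 × Fin 2 × Fin 2) ℂ :=
  (1 : Matrix (Fin 2) (Fin 2) ℂ) ⊗ₖ R

/-- `R₁₃ = (I₂ ⊗ P)(R ⊗ I₂)(I₂ ⊗ P)` with `P` the flip matrix. -/
noncomputable def R13 (R : Matrix (Fin 2 × Fin 2) (Fin 2 × Fin 2) ℂ) :
    Matrix (Fin 2 × Fin 2 × Fin 2) (Fin 2 × Fin 2 × Fin 2) ℂ :=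
  R23 flipP * R12 R * R23 flipP

/-- The type I R-matrix satisfies the quantum Yang–Baxter equation
`R₁₂ R₁₃ R₂₃ = R₂₃ R₁₃ R₁₂`. -/
def Rfun (p q : ℂ) (x y : Fin 2 × Fin 2) : ℂ :=
  if x = (0,0) ∧ y = (0,0) then 1
  else if x = (0,1) ∧ y = (0,1) then p
  else if x = (0,1) ∧ y = (1,0) then 1 - p * q
  else if x = (1,0) ∧ y = (1,0) then q
  else if x = (1,1) ∧ y = (1,1) then 1
  else 0

lemma RmatI_eq (p q : ℂ) : RmatI p q = Matrix.of (Rfun p q) := by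
  ext ⟨a, b⟩ ⟨c, d⟩
  fin_cases a <;> fin_cases b <;> fin_cases c <;> fin_cases d <;>
    · simp [RmatI, Rfun, Prod.ext_iff, Fin.ext_iff, finProdFinEquiv, Fin.divNat, Fin.modNat]
      try norm_num
      try rfl

lemma R12_eq (R : Matrix (Fin 2 × Fin 2) (Fin 2 × Fin 2) ℂ) :
    R12 R = Matrix.of (fun x y =>
      R (x.1, x.2.1) (y.1, y.2.1) * (if x.2.2 = y.2.2 then 1 else 0)) := by
  ext ⟨i, j, k⟩ ⟨a, b, c⟩
  simp [R12, Matrix.one_apply]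

lemma R23_eq (R : Matrix (Fin 2 × Fin 2) (Fin 2 × Fin 2) ℂ) :
    R23 R = Matrix.of (fun x y =>
      (if x.1 = y.1 then 1 else 0) * R x.2 y.2) := by
  ext ⟨i, j, k⟩ ⟨a, b, c⟩
  simp [R23, Matrix.one_apply]

lemma R13_eq (R : Matrix (Fin 2 × Fin 2) (Fin 2 × Fin 2) ℂ) :
    R13 R = Matrix.of (fun x y =>
      R (x.1, x.2.2) (y.1, y.2.2) * (if x.2.1 = y.2.1 then 1 else 0)) := by
  have hσ : R23 flipP = (1 : Matrix (Fin 2 × Fin 2 × Fin 2) (Fin 2 × Fin 2 × Fin 2) ℂ).submatrix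
      ((Equiv.refl (Fin 2)).prodCongr (Equiv.prodComm (Fin 2) (Fin 2)))
      ⇑(Equiv.refl (Fin 2 × Fin 2 × Fin 2)) := by
    ext ⟨i, j, k⟩ ⟨a, b, c⟩
    simp only [R23, flipP, Matrix.one_apply, Matrix.submatrix_apply, Matrix.kroneckerMap_apply,
      Matrix.of_apply, Equiv.refl_apply, Equiv.prodCongr_apply, Equiv.prodComm_apply,
      Prod.map, Prod.swap, Prod.mk.injEq, mul_ite, mul_one, mul_zero, ite_mul, one_mul, zero_mul]
    split_ifs <;> simp_all
  have h2 : R13 R = (R12 R).submatrix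
      ((Equiv.refl (Fin 2)).prodCongr (Equiv.prodComm (Fin 2) (Fin 2)))
      ((Equiv.refl (Fin 2)).prodCongr (Equiv.prodComm (Fin 2) (Fin 2))) := by
    rw [R13, hσ, Matrix.one_submatrix_mul, Matrix.mul_submatrix_one]
    ext x y
    simp [Matrix.submatrix_apply]
  rw [h2, R12_eq]
  ext ⟨i, j, k⟩ ⟨a, b, c⟩
  simp [Matrix.submatrix_apply]

set_option maxHeartbeats 2000000 in
theorem typeI_yang_baxter (p q : ℂ) (hp : p ≠ 0) (hq : q ≠ 0) :
    R12 (RmatI p q) * R13 (RmatI p q) * R23 (RmatI p q) =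
      R23 (RmatI p q) * R13 (RmatI p q) * R12 (RmatI p q) := by
  rw [RmatI_eq, R12_eq, R13_eq, R23_eq]
  ext ⟨i, j, k⟩ ⟨a, b, c⟩
  simp only [Matrix.mul_apply, Matrix.of_apply, Fintype.sum_prod_type, Fin.sum_univ_two]
  fin_cases i <;> fin_cases j <;> fin_cases k <;> fin_cases a <;> fin_cases b <;> fin_cases c <;>
    · simp only [Rfun, Prod.mk.injEq]
      norm_num
      try ring
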